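/- In the multi-period market with horizon T, fix C_T ∈ L^0(ℝ, F_T) and define recursively C_t := π_{t,t+1}(C_{t+1}) for t ≤ T−1. Then the multi-period AIP condition holds for the market S if and only if AIP holds for the extended market consisting of S together with the additional asset (C_t)_{t ∈ {0,…,T}} (where strategies may also invest in C). Moreover, if AIP holds, then essinf_{F_t} C_{t+1} ≤ C_t ≤ esssup_{F_t} C_{t+1} a.s. for all t ∈ {0, …, T−1}. -/

import Mathlib

open MeasureTheory Set Filter
open scoped Classical

noncomputable section

/-- Scalar product on `ℝ^d`. -/
def dotp {d : ℕ} (a b : Fin d → ℝ) : ℝ := ∑ i, a i * b i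

/-- `κ` is a regular version of the conditional law of `X` knowing the σ-algebra `H`. -/
structure CondLaw {Ω : Type*} (H : MeasurableSpace Ω) {mΩ : MeasurableSpace Ω}
    (μ : Measure Ω) {E : Type*} [MeasurableSpace E] (X : Ω → E) (κ : Ω → Measure E) :
    Prop where
  isProb : ∀ ω, IsProbabilityMeasure (κ ω)
  meas : ∀ A : Set E, MeasurableSet A → Measurable[H] fun ω => κ ω A
  law : ∀ A : Set E, MeasurableSet A → ∀ B : Set Ω, MeasurableSet[H] B →
    ∫⁻ ω in B, κ ω A ∂μ = μ (B ∩ X ⁻¹' A)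

/-- The support of the measure `κ ω`: the intersection of all closed sets of full
measure (for a regular conditional law this is the conditional support). -/
def condSupp {Ω E : Type*} [TopologicalSpace E] [MeasurableSpace E]
    (κ : Ω → Measure E) (ω : Ω) : Set E :=
  ⋂₀ {A : Set E | IsClosed A ∧ κ ω A = 1}

/-- `γ` is (a version of) the conditional essential supremum of `X` knowing `H`. -/
def IsCondEssSup {Ω : Type*} (H : MeasurableSpace Ω) {mΩ : MeasurableSpace Ω}
    (μ : Measure Ω) (X : Ω → ℝ) (γ : Ω → EReal) : Prop :=
  Measurable[H] γ ∧ (∀ᵐ ω ∂μ, (X ω : EReal) ≤ γ ω) ∧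
    ∀ ζ : Ω → EReal, Measurable[H] ζ → (∀ᵐ ω ∂μ, (X ω : EReal) ≤ ζ ω) →
      ∀ᵐ ω ∂μ, γ ω ≤ ζ ω

/-- `γ` is (a version of) the conditional essential infimum of `X` knowing `H`. -/
def IsCondEssInf {Ω : Type*} (H : MeasurableSpace Ω) {mΩ : MeasurableSpace Ω}
    (μ : Measure Ω) (X : Ω → ℝ) (γ : Ω → EReal) : Prop :=
  Measurable[H] γ ∧ (∀ᵐ ω ∂μ, γ ω ≤ (X ω : EReal)) ∧
    ∀ ζ : Ω → EReal, Measurable[H] ζ → (∀ᵐ ω ∂μ, ζ ω ≤ (X ω : EReal)) →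
      ∀ᵐ ω ∂μ, ζ ω ≤ γ ω

/-- `p` is (a version of) the essential infimum of the family `S` of random variables. -/
def IsEssInfSet {Ω : Type*} {mΩ : MeasurableSpace Ω} (μ : Measure Ω)
    (S : Set (Ω → ℝ)) (p : Ω → EReal) : Prop :=
  Measurable[mΩ] p ∧ (∀ f ∈ S, ∀ᵐ ω ∂μ, p ω ≤ (f ω : EReal)) ∧
    ∀ ζ : Ω → EReal, Measurable[mΩ] ζ → (∀ f ∈ S, ∀ᵐ ω ∂μ, ζ ω ≤ (f ω : EReal)) →
      ∀ᵐ ω ∂μ, ζ ω ≤ p ω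

/-- The set of super-hedging prices of the claim `Z` in the one-period market `(y, Y)`. -/
def Prices {Ω : Type*} (H : MeasurableSpace Ω) {mΩ : MeasurableSpace Ω} (μ : Measure Ω)
    {d : ℕ} (y Y : Ω → Fin d → ℝ) (Z : Ω → ℝ) : Set (Ω → ℝ) :=
  {x | Measurable[H] x ∧ ∃ θ : Ω → Fin d → ℝ, Measurable[H] θ ∧
    ∀ᵐ ω ∂μ, Z ω ≤ x ω + dotp (θ ω) fun i => Y ω i - y ω i}

/-- One-dimensional version of `Prices`. -/
def Prices1 {Ω : Type*} (H : MeasurableSpace Ω) {mΩ : MeasurableSpace Ω} (μ : Measure Ω)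
    (y Y : Ω → ℝ) (Z : Ω → ℝ) : Set (Ω → ℝ) :=
  {x | Measurable[H] x ∧ ∃ θ : Ω → ℝ, Measurable[H] θ ∧
    ∀ᵐ ω ∂μ, Z ω ≤ x ω + θ ω * (Y ω - y ω)}

/-- One-period super-hedging prices of the zero claim in the market extended by the
additional asset `(pZ, Z)`. -/
def PricesExt {Ω : Type*} (H : MeasurableSpace Ω) {mΩ : MeasurableSpace Ω} (μ : Measure Ω)
    {d : ℕ} (y Y : Ω → Fin d → ℝ) (Z pZ : Ω → ℝ) : Set (Ω → ℝ) :=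
  {x | Measurable[H] x ∧ ∃ α : Ω → ℝ, Measurable[H] α ∧ ∃ θ : Ω → Fin d → ℝ,
    Measurable[H] θ ∧
    ∀ᵐ ω ∂μ, 0 ≤ x ω + α ω * (Z ω - pZ ω) + dotp (θ ω) fun i => Y ω i - y ω i}

/-- The function `f = -g + δ_{D}` of the paper, valued in `EReal`. -/
def fObj {Ω : Type*} {d : ℕ} (g : Ω → (Fin d → ℝ) → ℝ) (D : Ω → Set (Fin d → ℝ))
    (ω : Ω) (z : Fin d → ℝ) : EReal :=
  if z ∈ D ω then ((-(g ω z) : ℝ) : EReal) else ⊤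

/-- Fenchel–Legendre conjugate of an `EReal`-valued function on `ℝ^d`. -/
def eConj {d : ℕ} (f : (Fin d → ℝ) → EReal) (x : Fin d → ℝ) : EReal :=
  ⨆ z : Fin d → ℝ, ((dotp x z : ℝ) : EReal) - f z

/-- Convex-analytic indicator function `δ_s`. -/
def indicatorE {E : Type*} (s : Set E) (x : E) : EReal := if x ∈ s then 0 else ⊤

/-- Relative concave envelope of `g` with respect to `D`. -/
def concEnv {d : ℕ} (g : (Fin d → ℝ) → ℝ) (D : Set (Fin d → ℝ)) (x : Fin d → ℝ) : EReal :=
  ⨅ v ∈ {v : (Fin d → ℝ) → ℝ | ConcaveOn ℝ univ v ∧ ∀ z ∈ D, g z ≤ v z}, ((v x : ℝ) : EReal)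

/-- Upper semicontinuous closure of an `EReal`-valued function. -/
def usClosure {E : Type*} [TopologicalSpace E] (F : E → EReal) (x : E) : EReal :=
  Filter.limsup F (nhds x)

/-- The slope `θ^*` of Corollary 2.19, with the conventions of the paper. -/
def thetaStar (g : ℝ → ℝ) (M I : ℝ) (S : EReal) : ℝ :=
  if S = (I : EReal) then 0 else if S = ⊤ then M
  else (g S.toReal - g I) / (S.toReal - I)

/-- Multi-period super-hedging prices at time `t` of the claim `g` paid at time `T`. -/
def PricesMulti {Ω : Type*} {mΩ : MeasurableSpace Ω} (𝓕 : ℕ → MeasurableSpace Ω)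
    (μ : Measure Ω) {d : ℕ} (S : ℕ → Ω → Fin d → ℝ) (t T : ℕ) (g : Ω → ℝ) :
    Set (Ω → ℝ) :=
  {x | Measurable[𝓕 t] x ∧ ∃ θ : ℕ → Ω → Fin d → ℝ, (∀ u, Measurable[𝓕 u] (θ u)) ∧
    ∃ ε : Ω → ℝ, Measurable[𝓕 T] ε ∧ (∀ᵐ ω ∂μ, 0 ≤ ε ω) ∧
    ∀ᵐ ω ∂μ, x ω + (∑ u ∈ Finset.Icc (t+1) T,
      dotp (θ (u-1) ω) fun i => S u ω i - S (u-1) ω i) - ε ω = g ω}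

/-- One-step super-hedging prices at time `t` of the (extended-real) claim `G`
paid at time `t+1`. -/
def OneStepPrices {Ω : Type*} {mΩ : MeasurableSpace Ω} (𝓕 : ℕ → MeasurableSpace Ω)
    (μ : Measure Ω) {d : ℕ} (S : ℕ → Ω → Fin d → ℝ) (t : ℕ) (G : Ω → EReal) :
    Set (Ω → ℝ) :=
  {x | Measurable[𝓕 t] x ∧ ∃ θ : Ω → Fin d → ℝ, Measurable[𝓕 t] θ ∧
    ∀ᵐ ω ∂μ, G ω ≤ ((x ω + dotp (θ ω) fun i => S (t+1) ω i - S t ω i : ℝ) : EReal)}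

/-- Multi-period super-hedging prices in the market extended by the additional asset `C`. -/
def PricesMultiExt {Ω : Type*} {mΩ : MeasurableSpace Ω} (𝓕 : ℕ → MeasurableSpace Ω)
    (μ : Measure Ω) {d : ℕ} (S : ℕ → Ω → Fin d → ℝ) (C : ℕ → Ω → ℝ) (t T : ℕ)
    (g : Ω → ℝ) : Set (Ω → ℝ) :=
  {x | Measurable[𝓕 t] x ∧ ∃ θ : ℕ → Ω → Fin d → ℝ, (∀ u, Measurable[𝓕 u] (θ u)) ∧
    ∃ α : ℕ → Ω → ℝ, (∀ u, Measurable[𝓕 u] (α u)) ∧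
    ∃ ε : Ω → ℝ, Measurable[𝓕 T] ε ∧ (∀ᵐ ω ∂μ, 0 ≤ ε ω) ∧
    ∀ᵐ ω ∂μ, x ω + (∑ u ∈ Finset.Icc (t+1) T,
      ((dotp (θ (u-1) ω) fun i => S u ω i - S (u-1) ω i) +
        α (u-1) ω * (C u ω - C (u-1) ω))) - ε ω = g ω}

/-- The set `R_t^T` of claims super-replicable at zero cost, one-dimensional case. -/
def RsetM {Ω : Type*} {mΩ : MeasurableSpace Ω} (𝓕 : ℕ → MeasurableSpace Ω)
    (μ : Measure Ω) (S : ℕ → Ω → ℝ) (t T : ℕ) : Set (Ω → ℝ) :=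
  {X | ∃ θ : ℕ → Ω → ℝ, (∀ u, Measurable[𝓕 u] (θ u)) ∧
    ∃ ε : Ω → ℝ, Measurable[𝓕 T] ε ∧ (∀ᵐ ω ∂μ, 0 ≤ ε ω) ∧
    ∀ᵐ ω ∂μ, X ω = (∑ u ∈ Finset.Icc (t+1) T, θ (u-1) ω * (S u ω - S (u-1) ω)) - ε ω}

/-- Closure with respect to convergence in probability. -/
def closureP {Ω : Type*} {mΩ : MeasurableSpace Ω} (μ : Measure Ω) (A : Set (Ω → ℝ)) :
    Set (Ω → ℝ) :=
  {X | ∃ f : ℕ → Ω → ℝ, (∀ n, f n ∈ A) ∧ TendstoInMeasure μ f Filter.atTop X}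


section AuxLemmas

variable {Ω : Type*}

lemma dotp_zero {d : ℕ} (v : Fin d → ℝ) : dotp (fun _ => (0:ℝ)) v = 0 := by simp [dotp]

lemma dotp_smul' {d : ℕ} (r : ℝ) (a v : Fin d → ℝ) :
    dotp (fun i => r * a i) v = r * dotp a v := by
  simp [dotp, Finset.mul_sum, mul_assoc]

lemma dotp_add' {d : ℕ} (a b v : Fin d → ℝ) :
    dotp (fun i => a i + b i) v = dotp a v + dotp b v := by
  simp [dotp, add_mul, Finset.sum_add_distrib]

lemma measurable_dotp {d : ℕ} {m : MeasurableSpace Ω} {f g : Ω → Fin d → ℝ}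
    (hf : Measurable[m] f) (hg : Measurable[m] g) :
    Measurable[m] fun ω => dotp (f ω) (g ω) := by
  letI := m
  unfold dotp
  exact Finset.measurable_sum _ fun i _ =>
    ((measurable_pi_apply i).comp hf).mul ((measurable_pi_apply i).comp hg)

lemma meas_ite {m : MeasurableSpace Ω} {E : Type*} [MeasurableSpace E] {B : Set Ω}
    [DecidablePred (· ∈ B)]
    (hB : MeasurableSet[m] B) {f g : Ω → E} (hf : Measurable[m] f)
    (hg : Measurable[m] g) :
    Measurable[m] fun ω => if ω ∈ B then f ω else g ω := by
  letI := m
  exact Measurable.ite hB hf hg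

lemma measSet_ltR {m : MeasurableSpace Ω} {f g : Ω → ℝ} (hf : Measurable[m] f)
    (hg : Measurable[m] g) : MeasurableSet[m] {ω | f ω < g ω} := by
  letI := m; exact measurableSet_lt hf hg

lemma measSet_leR {m : MeasurableSpace Ω} {f g : Ω → ℝ} (hf : Measurable[m] f)
    (hg : Measurable[m] g) : MeasurableSet[m] {ω | f ω ≤ g ω} := by
  letI := m; exact measurableSet_le hf hg

lemma measSet_ltE {m : MeasurableSpace Ω} {f g : Ω → EReal} (hf : Measurable[m] f)
    (hg : Measurable[m] g) : MeasurableSet[m] {ω | f ω < g ω} := by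
  letI := m; exact measurableSet_lt hf hg

lemma measSet_leE {m : MeasurableSpace Ω} {f g : Ω → EReal} (hf : Measurable[m] f)
    (hg : Measurable[m] g) : MeasurableSet[m] {ω | f ω ≤ g ω} := by
  letI := m; exact measurableSet_le hf hg

lemma measSet_inter {m : MeasurableSpace Ω} {A B : Set Ω} (hA : MeasurableSet[m] A)
    (hB : MeasurableSet[m] B) : MeasurableSet[m] (A ∩ B) := hA.inter hB

lemma meas_deltaS {d : ℕ} {m : MeasurableSpace Ω} {f g : Ω → Fin d → ℝ}
    (hf : Measurable[m] f) (hg : Measurable[m] g) :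
    Measurable[m] fun ω => (fun i => f ω i - g ω i) := by
  letI := m
  exact measurable_pi_lambda _ fun i =>
    ((measurable_pi_apply i).comp hf).sub ((measurable_pi_apply i).comp hg)

lemma ae_false_elim {mΩ : MeasurableSpace Ω} {μ : Measure Ω} [IsProbabilityMeasure μ]
    (h : ∀ᵐ _ω ∂μ, False) : False := by
  haveI : (MeasureTheory.ae μ).NeBot :=
    MeasureTheory.ae_neBot.2 (IsProbabilityMeasure.ne_zero μ)
  obtain ⟨_, hω⟩ := h.exists
  exact hω

/-- Key one-step consequence of multi-period AIP: a self-financed one-step position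
that is a.s. nonnegative at time `t+1` has nonnegative initial cost. -/
lemma lemA {Ω : Type*} [mΩ : MeasurableSpace Ω] (μ : Measure Ω) [IsProbabilityMeasure μ]
    (T : ℕ) (𝓕 : ℕ → MeasurableSpace Ω) (hmono : Monotone 𝓕) (hle : ∀ t, 𝓕 t ≤ mΩ)
    {d : ℕ} (S : ℕ → Ω → Fin d → ℝ) (hSadapt : ∀ t, Measurable[𝓕 t] (S t))
    (hAIP : ∀ t, t ≤ T → ∀ x ∈ PricesMulti 𝓕 μ S t T fun _ => (0:ℝ),
        (∀ᵐ ω ∂μ, x ω ≤ 0) → x =ᵐ[μ] fun _ => (0:ℝ))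
    (t : ℕ) (ht : t < T) {z : Ω → ℝ} (hz : Measurable[𝓕 t] z)
    {θ : Ω → Fin d → ℝ} (hθ : Measurable[𝓕 t] θ)
    (hineq : ∀ᵐ ω ∂μ, 0 ≤ z ω + dotp (θ ω) fun i => S (t+1) ω i - S t ω i) :
    ∀ᵐ ω ∂μ, 0 ≤ z ω := by
  have key : ∀ n : ℕ, ∀ᵐ ω ∂μ, ¬ (z ω < -(1/((n:ℝ)+1))) := by
    intro n
    set c : ℝ := 1/((n:ℝ)+1) with hcdef
    have hc : 0 < c := by positivity
    set B : Set Ω := {ω | z ω < -c} with hBdef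
    have hB : MeasurableSet[𝓕 t] B := measSet_ltR hz measurable_const
    set x₀ : Ω → ℝ := (fun ω => if ω ∈ B then -c else 0) with hx₀def
    have hx₀ : Measurable[𝓕 t] x₀ := meas_ite hB measurable_const measurable_const
    set θ' : Ω → Fin d → ℝ := (fun ω => if ω ∈ B then θ ω else fun _ => 0) with hθ'def
    have hθ' : Measurable[𝓕 t] θ' := meas_ite hB hθ measurable_const
    set gns : Ω → ℝ := (fun ω => dotp (θ' ω) fun i => S (t+1) ω i - S t ω i) with hgdef
    have hΔ : Measurable[𝓕 T] fun ω => (fun i => S (t+1) ω i - S t ω i) :=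
      meas_deltaS ((hSadapt (t+1)).mono (hmono ht) le_rfl)
        ((hSadapt t).mono (hmono ht.le) le_rfl)
    have hgT : Measurable[𝓕 T] gns := measurable_dotp (hθ'.mono (hmono ht.le) le_rfl) hΔ
    have hmem : x₀ ∈ PricesMulti 𝓕 μ S t T (fun _ => (0:ℝ)) := by
      refine ⟨hx₀, fun u => if u = t then θ' else fun _ _ => 0, ?_,
        fun ω => x₀ ω + gns ω, (hx₀.mono (hmono ht.le) le_rfl).add hgT, ?_, ?_⟩
      · intro u
        by_cases hu : u = t
        · subst hu; simpa using hθ'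
        · simp only [if_neg hu]; exact measurable_const
      · filter_upwards [hineq] with ω h0
        by_cases hω : ω ∈ B
        · have hzω : z ω < -c := hω
          simp only [hx₀def, hgdef, hθ'def, if_pos hω]
          linarith
        · simp [hx₀def, hgdef, hθ'def, if_neg hω, dotp_zero]
      · refine Filter.Eventually.of_forall fun ω => ?_
        have hsum : (∑ u ∈ Finset.Icc (t+1) T,
            dotp ((if u - 1 = t then θ' else fun _ _ => 0) ω)
              fun i => S u ω i - S (u-1) ω i) = gns ω := by
          rw [Finset.sum_eq_single_of_mem (t+1)
            (by simp only [Finset.mem_Icc]; omega)]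
          · simp [hgdef]
          · intro u hu hne
            have h1 : ¬ (u - 1 = t) := by
              simp only [Finset.mem_Icc] at hu; omega
            simp [h1, dotp_zero]
        simp only
        rw [hsum]
        ring
    have hle0 : ∀ᵐ ω ∂μ, x₀ ω ≤ 0 := by
      refine Filter.Eventually.of_forall fun ω => ?_
      by_cases hω : ω ∈ B <;> simp [hx₀def, hω, hc.le]
    have h0 := hAIP t ht.le x₀ hmem hle0
    filter_upwards [h0] with ω hω hlt
    have hωB : ω ∈ B := hlt
    have hω0 : x₀ ω = 0 := by simpa using hω
    simp only [hx₀def, if_pos hωB] at hω0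
    linarith
  have hall := ae_all_iff.mpr key
  filter_upwards [hall] with ω hω
  by_contra hneg
  push_neg at hneg
  obtain ⟨n, hn⟩ := exists_nat_one_div_lt (show (0:ℝ) < -z ω by linarith)
  exact hω n (by linarith)

/-- The set of one-step super-hedging prices of `C (t+1)` is nonempty. -/
lemma pricesNonempty {Ω : Type*} [mΩ : MeasurableSpace Ω] (μ : Measure Ω)
    [IsProbabilityMeasure μ]
    (𝓕 : ℕ → MeasurableSpace Ω) {d : ℕ} (S : ℕ → Ω → Fin d → ℝ) (t : ℕ)
    (g p : Ω → ℝ)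
    (h : IsEssInfSet μ (OneStepPrices 𝓕 μ S t fun ω => ((g ω : ℝ) : EReal))
      fun ω => ((p ω : ℝ) : EReal)) :
    (OneStepPrices 𝓕 μ S t fun ω => ((g ω : ℝ) : EReal)).Nonempty := by
  by_contra hne
  rw [Set.not_nonempty_iff_eq_empty] at hne
  have hp : Measurable[mΩ] p := by
    have := measurable_ereal_toReal.comp h.1
    simpa [Function.comp_def] using this
  have hζ : Measurable[mΩ] fun ω => ((p ω + 1 : ℝ) : EReal) :=
    measurable_coe_real_ereal.comp (hp.add measurable_const)
  have hcon := h.2.2 (fun ω => ((p ω + 1 : ℝ) : EReal)) hζ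
    (by intro f hf; rw [hne] at hf; exact absurd hf (Set.notMem_empty f))
  refine ae_false_elim (μ := μ) ?_
  filter_upwards [hcon] with ω hω
  rw [EReal.coe_le_coe_iff] at hω
  linarith

/-- One-step no-negative-price property in the extended market, under multi-period AIP
for the base market. -/
lemma lemExt {Ω : Type*} [mΩ : MeasurableSpace Ω] (μ : Measure Ω) [IsProbabilityMeasure μ]
    (T : ℕ) (𝓕 : ℕ → MeasurableSpace Ω) (hmono : Monotone 𝓕) (hle : ∀ t, 𝓕 t ≤ mΩ)
    {d : ℕ} (S : ℕ → Ω → Fin d → ℝ) (hSadapt : ∀ t, Measurable[𝓕 t] (S t))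
    (C : ℕ → Ω → ℝ) (hCadapt : ∀ t, Measurable[𝓕 t] (C t))
    (hAIP : ∀ t, t ≤ T → ∀ x ∈ PricesMulti 𝓕 μ S t T fun _ => (0:ℝ),
        (∀ᵐ ω ∂μ, x ω ≤ 0) → x =ᵐ[μ] fun _ => (0:ℝ))
    (t : ℕ) (ht : t < T)
    (hC : IsEssInfSet μ (OneStepPrices 𝓕 μ S t fun ω => ((C (t+1) ω : ℝ) : EReal))
      fun ω => ((C t ω : ℝ) : EReal))
    {x : Ω → ℝ} (hx : Measurable[𝓕 t] x)
    {θ : Ω → Fin d → ℝ} (hθ : Measurable[𝓕 t] θ)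
    {α : Ω → ℝ} (hα : Measurable[𝓕 t] α)
    (hineq : ∀ᵐ ω ∂μ, 0 ≤ x ω + (dotp (θ ω) fun i => S (t+1) ω i - S t ω i)
      + α ω * (C (t+1) ω - C t ω)) :
    ∀ᵐ ω ∂μ, 0 ≤ x ω := by
  obtain ⟨y₀, hy₀⟩ := pricesNonempty μ 𝓕 S t (C (t+1)) (C t) hC
  obtain ⟨hy₀m, φ₀, hφ₀m, hhed₀⟩ := hy₀
  -- Case A : α < 0
  have caseA : ∀ n : ℕ, ∀ᵐ ω ∂μ, ¬ (α ω < 0 ∧ x ω ≤ -(1/((n:ℝ)+1))) := by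
    intro n
    set c : ℝ := 1/((n:ℝ)+1) with hcdef
    have hc : 0 < c := by positivity
    set B : Set Ω := {ω | α ω < 0} ∩ {ω | x ω ≤ -c} with hBdef
    have hB : MeasurableSet[𝓕 t] B :=
      measSet_inter (measSet_ltR hα measurable_const) (measSet_leR hx measurable_const)
    set ytil : Ω → ℝ := (fun ω => if ω ∈ B then C t ω - c * (-(α ω))⁻¹ else y₀ ω)
      with hytildef
    have hytilm : Measurable[𝓕 t] ytil := by
      rw [hytildef]
      exact meas_ite hB ((hCadapt t).sub (measurable_const.mul (hα.neg.inv))) hy₀m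
    set φtil : Ω → Fin d → ℝ :=
      (fun ω => if ω ∈ B then (fun i => (-(α ω))⁻¹ * θ ω i) else φ₀ ω) with hφtildef
    have hφtilm : Measurable[𝓕 t] φtil := by
      rw [hφtildef]
      refine meas_ite hB ?_ hφ₀m
      letI := 𝓕 t
      exact measurable_pi_lambda _ fun i =>
        (hα.neg.inv).mul ((measurable_pi_apply i).comp hθ)
    have hmem : ytil ∈ OneStepPrices 𝓕 μ S t fun ω => ((C (t+1) ω : ℝ) : EReal) := by
      refine ⟨hytilm, φtil, hφtilm, ?_⟩
      filter_upwards [hineq, hhed₀] with ω h1 h2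
      by_cases hω : ω ∈ B
      · have hα0' : α ω < 0 := hω.1
        have hx0' : x ω ≤ -c := hω.2
        set β : ℝ := -(α ω) with hβdef
        have hβ : 0 < β := by simp only [hβdef]; linarith
        set D : ℝ := dotp (θ ω) fun i => S (t+1) ω i - S t ω i with hDdef
        have h3 : β * (C (t+1) ω - C t ω) ≤ -c + D := by
          have he : β * (C (t+1) ω - C t ω) = -(α ω * (C (t+1) ω - C t ω)) := by
            rw [hβdef]; ring
          rw [he]; linarith
        have h4 : C (t+1) ω - C t ω ≤ (-c + D) * β⁻¹ := by
          rw [← div_eq_mul_inv]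
          exact (le_div_iff₀ hβ).mpr (by linarith [mul_comm β (C (t+1) ω - C t ω)])
        simp only [hytildef, hφtildef, if_pos hω]
        rw [EReal.coe_le_coe_iff]
        rw [dotp_smul']
        have he2 : (-c + D) * β⁻¹ = -(c * β⁻¹) + β⁻¹ * D := by ring
        rw [he2] at h4
        linarith
      · simp only [hytildef, hφtildef, if_neg hω]
        exact h2
    have hmin := hC.2.1 ytil hmem
    filter_upwards [hmin] with ω hω hcon
    have hωB : ω ∈ B := ⟨hcon.1, hcon.2⟩
    simp only [hytildef, if_pos hωB] at hω
    rw [EReal.coe_le_coe_iff] at hω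
    have hβ : 0 < -(α ω) := by linarith [hcon.1]
    have : 0 < c * (-(α ω))⁻¹ := by positivity
    linarith
  -- Case B : 0 ≤ α ≤ m
  have caseB : ∀ n m : ℕ, ∀ᵐ ω ∂μ,
      ¬ (0 ≤ α ω ∧ α ω ≤ (m:ℝ) ∧ x ω ≤ -(1/((n:ℝ)+1))) := by
    intro n m
    set c : ℝ := 1/((n:ℝ)+1) with hcdef
    have hc : 0 < c := by positivity
    set η : ℝ := c/(2*((m:ℝ)+1)) with hηdef
    have hη : 0 < η := by positivity
    set G : Set Ω := ({ω | 0 ≤ α ω} ∩ {ω | α ω ≤ (m:ℝ)}) ∩ {ω | x ω ≤ -c} with hGdef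
    have hG𝓕 : MeasurableSet[𝓕 t] G :=
      measSet_inter (measSet_inter (measSet_leR measurable_const hα)
        (measSet_leR hα measurable_const)) (measSet_leR hx measurable_const)
    have hGmem : ∀ ω, ω ∈ G ↔ (0 ≤ α ω ∧ α ω ≤ (m:ℝ) ∧ x ω ≤ -c) := by
      intro ω
      simp only [hGdef, Set.mem_inter_iff, Set.mem_setOf_eq]
      tauto
    suffices hG0 : μ G = 0 by
      filter_upwards [measure_eq_zero_iff_ae_notMem.mp hG0] with ω hω hcon
      exact hω ((hGmem ω).mpr hcon)
    by_contra hG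
    have claim : ∃ y ∈ OneStepPrices 𝓕 μ S t fun ω => ((C (t+1) ω : ℝ) : EReal),
        μ (G ∩ {ω | y ω ≤ C t ω + η}) ≠ 0 := by
      by_contra hcl
      push_neg at hcl
      set ζ : Ω → EReal := fun ω => ((C t ω + if ω ∈ G then η else 0 : ℝ) : EReal)
        with hζdef
      have hζm : Measurable[mΩ] ζ := by
        refine measurable_coe_real_ereal.comp ?_
        exact (((hCadapt t).mono (hle t) le_rfl)).add
          (meas_ite (m := mΩ) (B := G) (hle t G hG𝓕) measurable_const measurable_const)
      have hζle : ∀ f ∈ OneStepPrices 𝓕 μ S t fun ω => ((C (t+1) ω : ℝ) : EReal),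
          ∀ᵐ ω ∂μ, ζ ω ≤ ((f ω : ℝ) : EReal) := by
        intro f hf
        have h1 := hC.2.1 f hf
        have h2 : ∀ᵐ ω ∂μ, ω ∉ G ∩ {ω | f ω ≤ C t ω + η} :=
          measure_eq_zero_iff_ae_notMem.mp (hcl f hf)
        filter_upwards [h1, h2] with ω hω1 hω2
        rw [EReal.coe_le_coe_iff] at hω1
        by_cases hωG : ω ∈ G
        · have hnot : ¬ f ω ≤ C t ω + η := fun hcon => hω2 ⟨hωG, hcon⟩
          simp only [hζdef, if_pos hωG]
          exact EReal.coe_le_coe_iff.mpr (by linarith [not_le.mp hnot])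
        · simp only [hζdef, if_neg hωG, add_zero]
          exact EReal.coe_le_coe_iff.mpr hω1
      have hfin := hC.2.2 ζ hζm hζle
      refine hG (measure_eq_zero_iff_ae_notMem.mpr ?_)
      filter_upwards [hfin] with ω hω hmem
      simp only [hζdef, if_pos hmem] at hω
      rw [EReal.coe_le_coe_iff] at hω
      linarith
    obtain ⟨y, hy, hμB⟩ := claim
    obtain ⟨hym, φ, hφm, hhedE⟩ := hy
    set B : Set Ω := G ∩ {ω | y ω ≤ C t ω + η} with hBdef
    have hB𝓕 : MeasurableSet[𝓕 t] B :=
      measSet_inter hG𝓕 (measSet_leR hym ((hCadapt t).add measurable_const))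
    set z : Ω → ℝ := (fun ω => if ω ∈ B then x ω + α ω * (y ω - C t ω) else 0)
      with hzdef
    have hzm : Measurable[𝓕 t] z := by
      rw [hzdef]
      exact meas_ite hB𝓕 (hx.add (hα.mul (hym.sub (hCadapt t)))) measurable_const
    set Θ : Ω → Fin d → ℝ :=
      (fun ω => if ω ∈ B then (fun i => θ ω i + α ω * φ ω i) else fun _ => 0)
      with hΘdef
    have hΘm : Measurable[𝓕 t] Θ := by
      rw [hΘdef]
      refine meas_ite hB𝓕 ?_ measurable_const
      letI := 𝓕 t
      exact measurable_pi_lambda _ fun i =>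
        ((measurable_pi_apply i).comp hθ).add (hα.mul ((measurable_pi_apply i).comp hφm))
    have h0 : ∀ᵐ ω ∂μ, 0 ≤ z ω + dotp (Θ ω) fun i => S (t+1) ω i - S t ω i := by
      filter_upwards [hineq, hhedE] with ω h1 h2
      by_cases hω : ω ∈ B
      · obtain ⟨hωG, hωy⟩ := hω
        obtain ⟨hα0, hαm, hxc⟩ := (hGmem ω).mp hωG
        rw [EReal.coe_le_coe_iff] at h2
        simp only [hzdef, hΘdef, if_pos (show ω ∈ B from ⟨hωG, hωy⟩)]
        set D : ℝ := dotp (θ ω) fun i => S (t+1) ω i - S t ω i with hDdef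
        set E : ℝ := dotp (φ ω) fun i => S (t+1) ω i - S t ω i with hEdef
        have hdot : (dotp (fun i => θ ω i + α ω * φ ω i)
            fun i => S (t+1) ω i - S t ω i) = D + α ω * E := by
          rw [show (fun i => θ ω i + α ω * φ ω i)
            = (fun i => θ ω i + (fun j => α ω * φ ω j) i) from rfl]
          rw [dotp_add', dotp_smul']
        rw [hdot]
        have hprod : 0 ≤ α ω * ((y ω + E) - C (t+1) ω) :=
          mul_nonneg hα0 (by linarith)
        nlinarith [h1, hprod]
      · simp [hzdef, hΘdef, if_neg hω, dotp_zero]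
    have hz0 := lemA μ T 𝓕 hmono hle S hSadapt hAIP t ht hzm hΘm h0
    have hyge := hC.2.1 y ⟨hym, φ, hφm, hhedE⟩
    refine hμB (measure_eq_zero_iff_ae_notMem.mpr ?_)
    filter_upwards [hz0, hyge] with ω h1 h2 hmem
    rw [EReal.coe_le_coe_iff] at h2
    obtain ⟨hωG, hωy⟩ := hmem
    obtain ⟨hα0, hαm, hxc⟩ := (hGmem ω).mp hωG
    have hωy' : y ω ≤ C t ω + η := hωy
    simp only [hzdef, if_pos (show ω ∈ B from ⟨hωG, hωy⟩)] at h1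
    have hb1 : α ω * (y ω - C t ω) ≤ (m:ℝ) * η :=
      mul_le_mul hαm (by linarith) (by linarith) (by positivity)
    have hb2 : (m:ℝ) * η ≤ c/2 := by
      rw [hηdef, mul_div_assoc']
      rw [div_le_div_iff₀ (by positivity) (by norm_num)]
      nlinarith [hc.le]
    linarith
  -- combine
  have hallA := ae_all_iff.mpr caseA
  have hallB : ∀ᵐ ω ∂μ, ∀ n m : ℕ,
      ¬ (0 ≤ α ω ∧ α ω ≤ (m:ℝ) ∧ x ω ≤ -(1/((n:ℝ)+1))) :=
    ae_all_iff.mpr fun n => ae_all_iff.mpr (caseB n)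
  filter_upwards [hallA, hallB] with ω h1 h2
  by_contra hneg
  push_neg at hneg
  obtain ⟨n, hn⟩ := exists_nat_one_div_lt (show (0:ℝ) < -x ω by linarith)
  have hxc : x ω ≤ -(1/((n:ℝ)+1)) := by linarith
  rcases lt_or_ge (α ω) 0 with hαc | hαc
  · exact h1 n ⟨hαc, hxc⟩
  · exact h2 n ⌈α ω⌉₊ ⟨hαc, Nat.le_ceil _, hxc⟩

end AuxLemmas


/-- Backward induction: under multi-period AIP for the base market, every price of the
zero claim in the extended market is a.s. nonnegative. -/
lemma lemC {Ω : Type*} [mΩ : MeasurableSpace Ω] (μ : Measure Ω) [IsProbabilityMeasure μ]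
    (T : ℕ) (𝓕 : ℕ → MeasurableSpace Ω) (hmono : Monotone 𝓕) (hle : ∀ t, 𝓕 t ≤ mΩ)
    {d : ℕ} (S : ℕ → Ω → Fin d → ℝ) (hSadapt : ∀ t, Measurable[𝓕 t] (S t))
    (C : ℕ → Ω → ℝ) (hCadapt : ∀ t, Measurable[𝓕 t] (C t))
    (hCrec : ∀ t, t < T → IsEssInfSet μ
      (OneStepPrices 𝓕 μ S t fun ω => ((C (t+1) ω : ℝ) : EReal))
      fun ω => ((C t ω : ℝ) : EReal))
    (hAIP : ∀ t, t ≤ T → ∀ x ∈ PricesMulti 𝓕 μ S t T fun _ => (0:ℝ),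
        (∀ᵐ ω ∂μ, x ω ≤ 0) → x =ᵐ[μ] fun _ => (0:ℝ)) :
    ∀ k t, t + k = T → ∀ x ∈ PricesMultiExt 𝓕 μ S C t T (fun _ => (0:ℝ)),
      ∀ᵐ ω ∂μ, 0 ≤ x ω := by
  intro k
  induction k with
  | zero =>
    intro t htT x hx
    obtain ⟨hxm, θ, hθ, α, hα, ε, hεm, hε0, heq⟩ := hx
    have hteq : t = T := by omega
    subst hteq
    filter_upwards [hε0, heq] with ω h1 h2
    rw [Finset.Icc_eq_empty (by omega), Finset.sum_empty] at h2
    linarith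
  | succ k ih =>
    intro t htT x hx
    have ht : t < T := by omega
    obtain ⟨hxm, θ, hθ, α, hα, ε, hεm, hε0, heq⟩ := hx
    set Y : Ω → ℝ := fun ω => x ω + (dotp (θ t ω) fun i => S (t+1) ω i - S t ω i)
      + α t ω * (C (t+1) ω - C t ω) with hYdef
    have hYm : Measurable[𝓕 (t+1)] Y := by
      rw [hYdef]
      refine ((hxm.mono (hmono (Nat.le_succ t)) le_rfl).add ?_).add ?_
      · exact measurable_dotp ((hθ t).mono (hmono (Nat.le_succ t)) le_rfl)
          (meas_deltaS (hSadapt (t+1)) ((hSadapt t).mono (hmono (Nat.le_succ t)) le_rfl))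
      · exact ((hα t).mono (hmono (Nat.le_succ t)) le_rfl).mul
          ((hCadapt (t+1)).sub ((hCadapt t).mono (hmono (Nat.le_succ t)) le_rfl))
    have hYmem : Y ∈ PricesMultiExt 𝓕 μ S C (t+1) T (fun _ => (0:ℝ)) := by
      refine ⟨hYm, θ, hθ, α, hα, ε, hεm, hε0, ?_⟩
      filter_upwards [heq] with ω hω
      have hins : Finset.Icc (t+1) T = insert (t+1) (Finset.Icc (t+2) T) := by
        ext u
        simp only [Finset.mem_Icc, Finset.mem_insert]
        omega
      rw [hins, Finset.sum_insert (by simp only [Finset.mem_Icc]; omega)] at hω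
      simp only [Nat.add_sub_cancel] at hω
      simp only [hYdef]
      linarith
    have hY := ih (t+1) (by omega) Y hYmem
    refine lemExt μ T 𝓕 hmono hle S hSadapt C hCadapt hAIP t ht (hCrec t ht)
      hxm (hθ t) (hα t) ?_
    filter_upwards [hY] with ω hω
    simpa [hYdef] using hω

/-- the multi-period AIP condition holds for the market `S` if and only
if it holds for the market extended with the additional asset `C`, where
`C_t = π_{t,t+1}(C_{t+1})`; moreover under AIP,
`essinf_{F_t} C_{t+1} ≤ C_t ≤ esssup_{F_t} C_{t+1}` a.s. -/
theorem multiperiod_aip_extension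
    {Ω : Type*} [mΩ : MeasurableSpace Ω] (μ : Measure Ω)
    [IsProbabilityMeasure μ] [μ.IsComplete]
    (T : ℕ) (𝓕 : ℕ → MeasurableSpace Ω) (hmono : Monotone 𝓕) (hle : ∀ t, 𝓕 t ≤ mΩ)
    (hcomp : ∀ t, ∀ s : Set Ω, μ s = 0 → MeasurableSet[𝓕 t] s)
    {d : ℕ} (S : ℕ → Ω → Fin d → ℝ) (hSadapt : ∀ t, Measurable[𝓕 t] (S t))
    (hS0 : ∀ t ω i, 0 ≤ S t ω i)
    (C : ℕ → Ω → ℝ) (hCadapt : ∀ t, Measurable[𝓕 t] (C t))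
    (hCrec : ∀ t, t < T → IsEssInfSet μ
      (OneStepPrices 𝓕 μ S t fun ω => ((C (t+1) ω : ℝ) : EReal))
      fun ω => ((C t ω : ℝ) : EReal))
    (It St : ℕ → Ω → EReal)
    (hIt : ∀ t, t < T → IsCondEssInf (𝓕 t) μ (C (t+1)) (It t))
    (hSt : ∀ t, t < T → IsCondEssSup (𝓕 t) μ (C (t+1)) (St t)) :
    ((∀ t, t ≤ T → ∀ x ∈ PricesMulti 𝓕 μ S t T fun _ => (0:ℝ),
        (∀ᵐ ω ∂μ, x ω ≤ 0) → x =ᵐ[μ] fun _ => (0:ℝ)) ↔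
      (∀ t, t ≤ T → ∀ x ∈ PricesMultiExt 𝓕 μ S C t T fun _ => (0:ℝ),
        (∀ᵐ ω ∂μ, x ω ≤ 0) → x =ᵐ[μ] fun _ => (0:ℝ))) ∧
    ((∀ t, t ≤ T → ∀ x ∈ PricesMulti 𝓕 μ S t T fun _ => (0:ℝ),
        (∀ᵐ ω ∂μ, x ω ≤ 0) → x =ᵐ[μ] fun _ => (0:ℝ)) →
      ∀ t, t < T → ∀ᵐ ω ∂μ,
        It t ω ≤ ((C t ω : ℝ) : EReal) ∧ ((C t ω : ℝ) : EReal) ≤ St t ω) := by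
  -- consequences of AIP : the bounds essinf ≤ C_t ≤ esssup
  have upper : ∀ t, t < T → ∀ᵐ ω ∂μ, ((C t ω : ℝ) : EReal) ≤ St t ω := by
    intro t ht
    obtain ⟨y₀, hy₀⟩ := pricesNonempty μ 𝓕 S t (C (t+1)) (C t) (hCrec t ht)
    obtain ⟨hy₀m, φ₀, hφ₀m, hhed₀⟩ := hy₀
    have hStm := (hSt t ht).1
    have hStge := (hSt t ht).2.1
    set D : Set Ω := {ω | St t ω < ((y₀ ω : ℝ) : EReal)} with hDdef
    have hD : MeasurableSet[𝓕 t] D :=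
      measSet_ltE hStm (measurable_coe_real_ereal.comp hy₀m)
    set x' : Ω → ℝ := (fun ω => if ω ∈ D then (St t ω).toReal else y₀ ω) with hx'def
    have hx'm : Measurable[𝓕 t] x' := by
      rw [hx'def]
      exact meas_ite hD (measurable_ereal_toReal.comp hStm) hy₀m
    set θ' : Ω → Fin d → ℝ := (fun ω => if ω ∈ D then (fun _ => 0) else φ₀ ω) with hθ'def
    have hθ'm : Measurable[𝓕 t] θ' := by
      rw [hθ'def]
      exact meas_ite hD measurable_const hφ₀m
    have hmem : x' ∈ OneStepPrices 𝓕 μ S t fun ω => ((C (t+1) ω : ℝ) : EReal) := by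
      refine ⟨hx'm, θ', hθ'm, ?_⟩
      filter_upwards [hhed₀, hStge] with ω h1 h2
      by_cases hω : ω ∈ D
      · have hωD : St t ω < ((y₀ ω : ℝ) : EReal) := hω
        have hnetop : St t ω ≠ ⊤ := (hωD.trans (EReal.coe_lt_top _)).ne
        have hnebot : St t ω ≠ ⊥ := by
          intro hbot
          rw [hbot] at h2
          exact absurd h2 (by simp)
        have hcoe : (((St t ω).toReal : ℝ) : EReal) = St t ω :=
          EReal.coe_toReal hnetop hnebot
        simp only [hx'def, hθ'def, if_pos hω, dotp_zero, add_zero]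
        rw [hcoe]
        exact h2
      · simp only [hx'def, hθ'def, if_neg hω]
        exact h1
    have hCle := (hCrec t ht).2.1 x' hmem
    filter_upwards [hCle, hStge] with ω h1 h2
    by_cases hω : ω ∈ D
    · have hωD : St t ω < ((y₀ ω : ℝ) : EReal) := hω
      have hnetop : St t ω ≠ ⊤ := (hωD.trans (EReal.coe_lt_top _)).ne
      have hnebot : St t ω ≠ ⊥ := by
        intro hbot
        rw [hbot] at h2
        exact absurd h2 (by simp)
      have hcoe : (((St t ω).toReal : ℝ) : EReal) = St t ω :=
        EReal.coe_toReal hnetop hnebot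
      simp only [hx'def, if_pos hω] at h1
      calc ((C t ω : ℝ) : EReal) ≤ (((St t ω).toReal : ℝ) : EReal) := h1
        _ = St t ω := hcoe
    · have hωD : ((y₀ ω : ℝ) : EReal) ≤ St t ω := not_lt.mp hω
      simp only [hx'def, if_neg hω] at h1
      exact h1.trans hωD
  constructor
  · constructor
    · -- plain AIP ⇒ extended AIP
      intro hAIP t htT x hx hxle
      have hge := lemC μ T 𝓕 hmono hle S hSadapt C hCadapt hCrec hAIP (T - t) t
        (by omega) x hx
      filter_upwards [hge, hxle] with ω h1 h2
      exact le_antisymm h2 h1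
    · -- extended AIP ⇒ plain AIP
      intro hExt t htT x hx hxle
      refine hExt t htT x ?_ hxle
      obtain ⟨hxm, θ, hθ, ε, hεm, hε0, heq⟩ := hx
      refine ⟨hxm, θ, hθ, fun _ _ => 0, fun _ => measurable_const, ε, hεm, hε0, ?_⟩
      filter_upwards [heq] with ω hω
      simpa using hω
  · -- under AIP : essinf ≤ C_t ≤ esssup
    intro hAIP t ht
    have hImeas := (hIt t ht).1
    have hIle := (hIt t ht).2.1
    have key : ∀ f ∈ OneStepPrices 𝓕 μ S t fun ω => ((C (t+1) ω : ℝ) : EReal),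
        ∀ᵐ ω ∂μ, It t ω ≤ ((f ω : ℝ) : EReal) := by
      intro f hf
      obtain ⟨hfm, φ, hφm, hhedE⟩ := hf
      have keyn : ∀ n : ℕ, ∀ᵐ ω ∂μ,
          ¬ (((f ω + 1/((n:ℝ)+1) : ℝ) : EReal) ≤ It t ω) := by
        intro n
        set c : ℝ := 1/((n:ℝ)+1) with hcdef
        have hc : 0 < c := by positivity
        set B : Set Ω := {ω | ((f ω + c : ℝ) : EReal) ≤ It t ω} with hBdef
        have hB : MeasurableSet[𝓕 t] B :=
          measSet_leE (measurable_coe_real_ereal.comp (hfm.add measurable_const)) hImeas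
        set z : Ω → ℝ := (fun ω => if ω ∈ B then -c else 0) with hzdef
        have hzm : Measurable[𝓕 t] z := by
          rw [hzdef]; exact meas_ite hB measurable_const measurable_const
        set Θ : Ω → Fin d → ℝ := (fun ω => if ω ∈ B then φ ω else fun _ => 0) with hΘdef
        have hΘm : Measurable[𝓕 t] Θ := by
          rw [hΘdef]; exact meas_ite hB hφm measurable_const
        have h0 : ∀ᵐ ω ∂μ, 0 ≤ z ω + dotp (Θ ω) fun i => S (t+1) ω i - S t ω i := by
          filter_upwards [hhedE, hIle] with ω h1 h2
          by_cases hω : ω ∈ B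
          · have hωB : ((f ω + c : ℝ) : EReal) ≤ It t ω := hω
            have h3 : ((f ω + c : ℝ) : EReal) ≤ ((C (t+1) ω : ℝ) : EReal) :=
              hωB.trans h2
            rw [EReal.coe_le_coe_iff] at h3
            have h4 : (C (t+1) ω : ℝ)
                ≤ f ω + dotp (φ ω) fun i => S (t+1) ω i - S t ω i := by
              exact_mod_cast h1
            simp only [hzdef, hΘdef, if_pos hω]
            linarith
          · simp [hzdef, hΘdef, if_neg hω, dotp_zero]
        have hz0 := lemA μ T 𝓕 hmono hle S hSadapt hAIP t ht hzm hΘm h0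
        filter_upwards [hz0] with ω hω hcon
        have hωB : ω ∈ B := hcon
        simp only [hzdef, if_pos hωB] at hω
        linarith
      have hall := ae_all_iff.mpr keyn
      filter_upwards [hall] with ω hω
      by_contra hcon
      push_neg at hcon
      obtain ⟨q, hq1, hq2⟩ := EReal.exists_between_coe_real hcon
      rw [EReal.coe_lt_coe_iff] at hq1
      obtain ⟨n, hn⟩ := exists_nat_one_div_lt (show (0:ℝ) < q - f ω by linarith)
      refine hω n (le_of_lt ?_)
      calc ((f ω + 1/((n:ℝ)+1) : ℝ) : EReal) < ((q : ℝ) : EReal) :=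
            EReal.coe_lt_coe_iff.mpr (by linarith)
        _ < It t ω := hq2
    have lower := (hCrec t ht).2.2 (It t) (hImeas.mono (hle t) le_rfl) key
    filter_upwards [lower, upper t ht] with ω h1 h2
    exact ⟨h1, h2⟩
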